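/- Suppose f: [0,1] → ℝ is nonnegative and satisfies f(√(x²+y²)) ≥ f(x) + f(y) for all x, y ≥ 0 with x²+y² ≤ 1. Then for every μ ≥ 1 and x ≥ y ≥ 0 with x²+y² ≤ 1 and f(x) > 0, f(√(x²+y²))^μ ≥ f(x)^μ + (μ²/(μ+1))·f(x)^(μ−1)·f(y) + (2^μ − μ²/(μ+1) − 1)·f(y)^μ. -/

import Mathlib

open Real Set

private lemma bern {p t : ℝ} (hp : 0 ≤ p) (ht0 : 0 ≤ t) (ht1 : t ≤ 1) :
    1 + (p * (p + 1) / (p + 2)) * t ≤ (1 + t) ^ p := by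
  rcases le_or_gt 1 p with h1 | h1
  · have hb := one_add_mul_self_le_rpow_one_add (by linarith : (-1:ℝ) ≤ t) h1
    have h2 : p * (p + 1) / (p + 2) * t ≤ p * t := by
      apply mul_le_mul_of_nonneg_right _ ht0
      rw [div_le_iff₀ (by linarith)]
      nlinarith
    linarith
  · have hcon := Real.concaveOn_rpow hp h1.le
    have key := hcon.2 (Set.mem_Ici.2 (by norm_num : (0:ℝ) ≤ 1))
      (Set.mem_Ici.2 (by norm_num : (0:ℝ) ≤ 2)) (by linarith : 0 ≤ 1 - t) ht0 (by ring)
    simp only [smul_eq_mul, Real.one_rpow] at key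
    have h12 : (1 - t) * 1 + t * 2 = 1 + t := by ring
    rw [h12] at key
    have h2p : 1 + p * Real.log 2 ≤ (2:ℝ) ^ p := by
      rw [Real.rpow_def_of_pos (by norm_num : (0:ℝ) < 2)]
      have := Real.add_one_le_exp (Real.log 2 * p)
      linarith [this]
    have hlog : p * (p + 1) / (p + 2) ≤ p * Real.log 2 := by
      have hl2 : (0.6931471803 : ℝ) < Real.log 2 := Real.log_two_gt_d9
      rw [div_le_iff₀ (by linarith)]
      have h3 : p + 1 ≤ Real.log 2 * (p + 2) := by nlinarith
      calc p * (p + 1) ≤ p * (Real.log 2 * (p + 2)) :=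
            mul_le_mul_of_nonneg_left h3 hp
        _ = p * Real.log 2 * (p + 2) := by ring
    nlinarith [key, h2p, hlog, ht0]

private lemma key {μ t : ℝ} (hμ : 1 ≤ μ) (ht0 : 0 ≤ t) (ht1 : t ≤ 1) :
    1 + (μ ^ 2 / (μ + 1)) * t + (2 ^ μ - μ ^ 2 / (μ + 1) - 1) * t ^ μ ≤ (1 + t) ^ μ := by
  have hμ0 : (0:ℝ) < μ := lt_of_lt_of_le one_pos hμ
  set c : ℝ := μ ^ 2 / (μ + 1) with hc
  rcases eq_or_lt_of_le ht0 with h0 | h0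
  · rw [← h0, Real.zero_rpow (ne_of_gt hμ0)]
    simp
  -- t > 0 case
  set G : ℝ → ℝ := fun s => ((1 + s) ^ μ - 1 - c * s) / s ^ μ with hG
  -- derivative of G at s > 0
  have hderiv : ∀ s : ℝ, 0 < s → HasDerivAt G
      (((1 * μ * (1 + s) ^ (μ - 1) - c) * s ^ μ -
        ((1 + s) ^ μ - 1 - c * s) * (1 * μ * s ^ (μ - 1))) / (s ^ μ) ^ 2) s := by
    intro s hs
    have h1s : (0:ℝ) < 1 + s := by linarith
    have hN : HasDerivAt (fun s : ℝ => (1 + s) ^ μ - 1 - c * s)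
        (1 * μ * (1 + s) ^ (μ - 1) - c) s := by
      have hA : HasDerivAt (fun s : ℝ => (1 + s) ^ μ) (1 * μ * (1 + s) ^ (μ - 1)) s :=
        (HasDerivAt.const_add 1 (hasDerivAt_id s)).rpow_const (Or.inl (ne_of_gt h1s))
      have hB : HasDerivAt (fun s : ℝ => c * s) c s := by
        simpa using (hasDerivAt_id s).const_mul c
      exact (hA.sub_const 1).sub hB
    have hD : HasDerivAt (fun s : ℝ => s ^ μ) (1 * μ * s ^ (μ - 1)) s :=
      (hasDerivAt_id s).rpow_const (Or.inl (ne_of_gt hs))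
    exact hN.div hD (ne_of_gt (Real.rpow_pos_of_pos hs μ))
  -- derivative is nonpositive on (0,1)
  have hnonpos : ∀ s ∈ interior (Ioc (0:ℝ) 1), deriv G s ≤ 0 := by
    intro s hs
    rw [interior_Ioc] at hs
    obtain ⟨hs0, hs1⟩ := hs
    rw [(hderiv s hs0).deriv]
    apply div_nonpos_of_nonpos_of_nonneg _ (sq_nonneg _)
    have h1s : (0:ℝ) < 1 + s := by linarith
    have e1 : s ^ μ = s ^ (μ - 1) * s := by
      rw [← Real.rpow_add_one (ne_of_gt hs0) (μ - 1)]; ring_nf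
    have e2 : (1 + s) ^ μ = (1 + s) ^ (μ - 1) * (1 + s) := by
      rw [← Real.rpow_add_one (ne_of_gt h1s) (μ - 1)]; ring_nf
    rw [e1, e2]
    have hb := bern (p := μ - 1) (by linarith) hs0.le hs1.le
    have hkey : 0 ≤ μ * ((1 + s) ^ (μ - 1) - 1) - c * s * (μ - 1) := by
      have h1 : (μ - 1) * μ / (μ + 1) * s ≤ (1 + s) ^ (μ - 1) - 1 := by
        have := hb
        have harith : (μ - 1) * ((μ - 1) + 1) / ((μ - 1) + 2) = (μ - 1) * μ / (μ + 1) := by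
          ring_nf
        rw [harith] at this
        linarith
      have h2 : c * s * (μ - 1) = μ * ((μ - 1) * μ / (μ + 1) * s) := by
        rw [hc]; field_simp
      rw [h2]
      have := mul_le_mul_of_nonneg_left h1 hμ0.le
      linarith
    calc (1 * μ * (1 + s) ^ (μ - 1) - c) * (s ^ (μ - 1) * s) -
          ((1 + s) ^ (μ - 1) * (1 + s) - 1 - c * s) * (1 * μ * s ^ (μ - 1))
        = s ^ (μ - 1) * (-(μ * ((1 + s) ^ (μ - 1) - 1) - c * s * (μ - 1))) := by ring
      _ ≤ 0 := mul_nonpos_of_nonneg_of_nonpos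
          (Real.rpow_nonneg hs0.le _) (by linarith)
  -- G is antitone on (0,1]
  have hanti : AntitoneOn G (Ioc (0:ℝ) 1) := by
    apply antitoneOn_of_deriv_nonpos (convex_Ioc 0 1) _ _ hnonpos
    · intro s hs
      exact ((hderiv s hs.1).differentiableAt).continuousAt.continuousWithinAt
    · intro s hs
      rw [interior_Ioc] at hs
      exact ((hderiv s hs.1).differentiableAt).differentiableWithinAt
  have hGt : G 1 ≤ G t := hanti ⟨h0, ht1⟩ ⟨one_pos, le_refl 1⟩ ht1
  have hG1 : G 1 = 2 ^ μ - 1 - c := by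
    simp [hG, Real.one_rpow]
    norm_num
  rw [hG1, hG] at hGt
  have htμ : (0:ℝ) < t ^ μ := Real.rpow_pos_of_pos h0 μ
  rw [le_div_iff₀ htμ] at hGt
  linarith

theorem stmt_13 (f : ℝ → ℝ)
    (hf0 : ∀ t ∈ Set.Icc (0 : ℝ) 1, 0 ≤ f t)
    (hsuper : ∀ x y : ℝ, 0 ≤ x → 0 ≤ y → x ^ 2 + y ^ 2 ≤ 1 →
      f (Real.sqrt (x ^ 2 + y ^ 2)) ≥ f x + f y)
    (μ : ℝ) (hμ : 1 ≤ μ)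
    (x y : ℝ) (hy0 : 0 ≤ y) (hyx : y ≤ x) (hxy : x ^ 2 + y ^ 2 ≤ 1)
    (hfx : 0 < f x) :
    f (Real.sqrt (x ^ 2 + y ^ 2)) ^ μ ≥
      f x ^ μ + (μ ^ 2 / (μ + 1)) * f x ^ (μ - 1) * f y
        + (2 ^ μ - μ ^ 2 / (μ + 1) - 1) * f y ^ μ := by
  have hx0 : 0 ≤ x := hy0.trans hyx
  have hx1 : x ≤ 1 := by nlinarith
  have hy1 : y ≤ 1 := hyx.trans hx1
  set A := f x with hA
  set B := f y with hB
  have hB0 : 0 ≤ B := hf0 y ⟨hy0, hy1⟩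
  -- monotonicity : B ≤ A
  have hBA : B ≤ A := by
    set a := Real.sqrt (x ^ 2 - y ^ 2) with ha
    have ha0 : 0 ≤ a := Real.sqrt_nonneg _
    have ha2 : a ^ 2 = x ^ 2 - y ^ 2 := Real.sq_sqrt (by nlinarith)
    have ha1 : a ≤ 1 := by nlinarith
    have hfa : 0 ≤ f a := hf0 a ⟨ha0, ha1⟩
    have h := hsuper a y ha0 hy0 (by rw [ha2]; nlinarith)
    rw [ha2] at h
    have hxx : Real.sqrt (x ^ 2 - y ^ 2 + y ^ 2) = x := by
      rw [show x ^ 2 - y ^ 2 + y ^ 2 = x ^ 2 by ring]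
      exact Real.sqrt_sq hx0
    rw [hxx] at h
    linarith
  have hs := hsuper x y hx0 hy0 hxy
  have hAB0 : 0 ≤ A + B := by linarith
  have hμ0 : 0 ≤ μ := le_trans zero_le_one hμ
  have hmain : (A + B) ^ μ ≤ f (Real.sqrt (x ^ 2 + y ^ 2)) ^ μ :=
    Real.rpow_le_rpow hAB0 hs hμ0
  set t := B / A with ht
  have ht0 : 0 ≤ t := div_nonneg hB0 hfx.le
  have ht1 : t ≤ 1 := (div_le_one hfx).mpr hBA
  have hk := key hμ ht0 ht1
  have hAt : A * t = B := by rw [ht, mul_comm, div_mul_cancel₀ B (ne_of_gt hfx)]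
  have hsplit : A + B = A * (1 + t) := by rw [mul_add, mul_one, hAt]
  have hmul : (A + B) ^ μ = A ^ μ * (1 + t) ^ μ := by
    rw [hsplit, Real.mul_rpow hfx.le (by linarith)]
  have hAμ : (0:ℝ) < A ^ μ := Real.rpow_pos_of_pos hfx μ
  have hmul2 := mul_le_mul_of_nonneg_left hk hAμ.le
  -- rewrite pieces
  have e1 : A ^ μ * t = A ^ (μ - 1) * B := by
    have : A ^ μ = A ^ (μ - 1) * A := by
      rw [← Real.rpow_add_one (ne_of_gt hfx) (μ - 1)]; ring_nf
    rw [this, mul_assoc, hAt]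
  have e2 : A ^ μ * t ^ μ = B ^ μ := by
    rw [← Real.mul_rpow hfx.le ht0, hAt]
  have expand : A ^ μ * (1 + μ ^ 2 / (μ + 1) * t + (2 ^ μ - μ ^ 2 / (μ + 1) - 1) * t ^ μ)
      = A ^ μ + μ ^ 2 / (μ + 1) * A ^ (μ - 1) * B
        + (2 ^ μ - μ ^ 2 / (μ + 1) - 1) * B ^ μ := by
    linear_combination (μ ^ 2 / (μ + 1)) * e1 + (2 ^ μ - μ ^ 2 / (μ + 1) - 1) * e2
  rw [expand] at hmul2
  rw [← hmul] at hmul2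
  exact le_trans hmul2 hmain
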